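/- arXiv:1205.2163 — 3 statements merged into one kernel-verified Lean document; each statement's English description precedes it below -/
import Mathlib

section
/- Let A be a bialgebra over a commutative ring k and let e ∈ A be a grouplike element (Δ(e)=e⊗e, ε(e)=1) such that e·a = e·a·e for all a ∈ A (note this forces e·e = e, so left multiplication by e is an idempotent k-linear projection and eA = {e·a : a ∈ A} is a direct summand of A). Then: eA is closed under the multiplication of A; e is a two-sided unit for eA; Δ maps eA into the canonical (split) image of eA⊗eA in A⊗A; and eA, endowed with the restricted multiplication, unit e, the corestricted comultiplication eA → eA⊗eA (characterized by Δ(ea) = ea₁⊗ea₂) and the restricted counit, is a bialgebra over k. -/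
open TensorProduct LinearMap

section WDL

variable (R : Type*) [CommRing R]

section AlgDefs

variable {A B : Type*} [Ring A] [Ring B] [Algebra R A] [Algebra R B]

/-- Weak distributive law axioms, stated pointwise on pure tensors. -/
def IsWeakDistLaw (ψ : A ⊗[R] B →ₗ[R] B ⊗[R] A) : Prop :=
  (∀ (a a' : A) (b : B), ψ ((a * a') ⊗ₜ[R] b) =
      lTensor B (mul' R A) ((TensorProduct.assoc R B A A)
        (rTensor A ψ ((TensorProduct.assoc R A B A).symm (a ⊗ₜ[R] ψ (a' ⊗ₜ[R] b)))))) ∧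
  (∀ (a : A) (b b' : B), ψ (a ⊗ₜ[R] (b * b')) =
      rTensor A (mul' R B) ((TensorProduct.assoc R B B A).symm
        (lTensor B ψ ((TensorProduct.assoc R B A B) (ψ (a ⊗ₜ[R] b) ⊗ₜ[R] b'))))) ∧
  (∀ b : B, ψ ((1 : A) ⊗ₜ[R] b) =
      rTensor A (mul' R B) ((TensorProduct.assoc R B B A).symm
        (b ⊗ₜ[R] ψ ((1 : A) ⊗ₜ[R] (1 : B))))) ∧
  (∀ a : A, ψ (a ⊗ₜ[R] (1 : B)) =
      lTensor B (mul' R A) ((TensorProduct.assoc R B A A)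
        (ψ ((1 : A) ⊗ₜ[R] (1 : B)) ⊗ₜ[R] a)))

/-- (Strict) distributive law axioms, stated pointwise on pure tensors. -/
def IsDistLaw (ψ : A ⊗[R] B →ₗ[R] B ⊗[R] A) : Prop :=
  (∀ (a a' : A) (b : B), ψ ((a * a') ⊗ₜ[R] b) =
      lTensor B (mul' R A) ((TensorProduct.assoc R B A A)
        (rTensor A ψ ((TensorProduct.assoc R A B A).symm (a ⊗ₜ[R] ψ (a' ⊗ₜ[R] b)))))) ∧
  (∀ (a : A) (b b' : B), ψ (a ⊗ₜ[R] (b * b')) =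
      rTensor A (mul' R B) ((TensorProduct.assoc R B B A).symm
        (lTensor B ψ ((TensorProduct.assoc R B A B) (ψ (a ⊗ₜ[R] b) ⊗ₜ[R] b'))))) ∧
  (∀ b : B, ψ ((1 : A) ⊗ₜ[R] b) = b ⊗ₜ[R] (1 : A)) ∧
  (∀ a : A, ψ (a ⊗ₜ[R] (1 : B)) = (1 : B) ⊗ₜ[R] a)

/-- `φ` is a weak inverse of `ψ`. -/
def IsWeakInverse (ψ : A ⊗[R] B →ₗ[R] B ⊗[R] A) (φ : B ⊗[R] A →ₗ[R] A ⊗[R] B) : Prop :=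
  (∀ (a : A) (b : B), ψ (φ (b ⊗ₜ[R] a)) =
      rTensor A (mul' R B) ((TensorProduct.assoc R B B A).symm
        (b ⊗ₜ[R] ψ (a ⊗ₜ[R] (1 : B))))) ∧
  (∀ (a : A) (b : B), φ (ψ (a ⊗ₜ[R] b)) =
      rTensor B (mul' R A) ((TensorProduct.assoc R A A B).symm
        (a ⊗ₜ[R] φ (b ⊗ₜ[R] (1 : A)))))

/-- The weak wreath product multiplication `(μ_B ⊗ μ_A) ∘ (id_B ⊗ ψ ⊗ id_A)`. -/
noncomputable def wreathMul (ψ : A ⊗[R] B →ₗ[R] B ⊗[R] A) :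
    (B ⊗[R] A) ⊗[R] (B ⊗[R] A) →ₗ[R] B ⊗[R] A :=
  TensorProduct.map (mul' R B) (mul' R A)
    ∘ₗ (TensorProduct.assoc R B B (A ⊗[R] A)).symm.toLinearMap
    ∘ₗ lTensor B (TensorProduct.assoc R B A A).toLinearMap
    ∘ₗ lTensor B (rTensor A ψ)
    ∘ₗ lTensor B (TensorProduct.assoc R A B A).symm.toLinearMap
    ∘ₗ (TensorProduct.assoc R B A (B ⊗[R] A)).toLinearMap

end AlgDefs

section CoalgDefs

variable {A B : Type*} [AddCommGroup A] [AddCommGroup B] [Module R A] [Module R B]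

/-- Tensor product comultiplication `(id ⊗ tw ⊗ id) ∘ (dA ⊗ dB)` built from the
comultiplication data `dA`, `dB`. -/
noncomputable def comulD (dA : A →ₗ[R] A ⊗[R] A) (dB : B →ₗ[R] B ⊗[R] B) :
    A ⊗[R] B →ₗ[R] (A ⊗[R] B) ⊗[R] (A ⊗[R] B) :=
  (TensorProduct.tensorTensorTensorComm R A A B B).toLinearMap ∘ₗ TensorProduct.map dA dB

/-- Tensor product counit `ε_A ⊗ ε_B`. -/
noncomputable def counitD (eA : A →ₗ[R] R) (eB : B →ₗ[R] R) : A ⊗[R] B →ₗ[R] R :=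
  (TensorProduct.lid R R).toLinearMap ∘ₗ TensorProduct.map eA eB

/-- The weakly comonoidal conditions for a mutually weak inverse pair `(ψ, φ)`,
with respect to comultiplication/counit data on `A` and `B`. -/
def IsWeaklyComonoidalD (ψ : A ⊗[R] B →ₗ[R] B ⊗[R] A) (φ : B ⊗[R] A →ₗ[R] A ⊗[R] B)
    (dA : A →ₗ[R] A ⊗[R] A) (dB : B →ₗ[R] B ⊗[R] B)
    (eA : A →ₗ[R] R) (eB : B →ₗ[R] R) : Prop :=
  (rTensor (B ⊗[R] A) (ψ ∘ₗ φ) ∘ₗ comulD R dB dA ∘ₗ ψ =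
      TensorProduct.map ψ ψ ∘ₗ comulD R dA dB) ∧
  (lTensor (B ⊗[R] A) (ψ ∘ₗ φ) ∘ₗ comulD R dB dA ∘ₗ ψ =
      TensorProduct.map ψ ψ ∘ₗ comulD R dA dB) ∧
  (rTensor (A ⊗[R] B) (φ ∘ₗ ψ) ∘ₗ comulD R dA dB ∘ₗ φ =
      TensorProduct.map φ φ ∘ₗ comulD R dB dA) ∧
  (lTensor (A ⊗[R] B) (φ ∘ₗ ψ) ∘ₗ comulD R dA dB ∘ₗ φ =
      TensorProduct.map φ φ ∘ₗ comulD R dB dA) ∧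
  (counitD R eB eA ∘ₗ ψ = counitD R eA eB ∘ₗ φ ∘ₗ ψ)

end CoalgDefs

section ComonClass

variable {A B : Type*} [AddCommGroup A] [AddCommGroup B] [Module R A] [Module R B]
  [Coalgebra R A] [Coalgebra R B]

/-- Tensor product comultiplication on `A ⊗ B` for coalgebras `A`, `B`. -/
noncomputable def comulTP : A ⊗[R] B →ₗ[R] (A ⊗[R] B) ⊗[R] (A ⊗[R] B) :=
  comulD R (Coalgebra.comul (R := R) (A := A)) (Coalgebra.comul (R := R) (A := B))

/-- Tensor product counit on `A ⊗ B` for coalgebras `A`, `B`. -/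
noncomputable def counitTP : A ⊗[R] B →ₗ[R] R :=
  counitD R (Coalgebra.counit (R := R) (A := A)) (Coalgebra.counit (R := R) (A := B))

end ComonClass

/-- Weakly comonoidal pair with respect to given coalgebra instances. -/
def IsWeaklyComonoidal {A B : Type*} [Ring A] [Ring B] [Algebra R A] [Algebra R B]
    [Coalgebra R A] [Coalgebra R B]
    (ψ : A ⊗[R] B →ₗ[R] B ⊗[R] A) (φ : B ⊗[R] A →ₗ[R] A ⊗[R] B) : Prop :=
  IsWeaklyComonoidalD R ψ φ (Coalgebra.comul (R := R) (A := A))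
    (Coalgebra.comul (R := R) (A := B)) (Coalgebra.counit (R := R) (A := A))
    (Coalgebra.counit (R := R) (A := B))

end WDL

/-- Data of a (possibly weak) bialgebra structure on a module `M`. -/
structure WBAData (R M : Type*) [CommRing R] [AddCommGroup M] [Module R M] where
  mul : M ⊗[R] M →ₗ[R] M
  one : M
  comul : M →ₗ[R] M ⊗[R] M
  counit : M →ₗ[R] R

namespace WBAData

variable {R M : Type*} [CommRing R] [AddCommGroup M] [Module R M] (d : WBAData R M)

/-- The induced multiplication of `M ⊗ M`. -/
noncomputable def mul2 : (M ⊗[R] M) ⊗[R] (M ⊗[R] M) →ₗ[R] M ⊗[R] M :=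
  TensorProduct.map d.mul d.mul ∘ₗ (TensorProduct.tensorTensorTensorComm R M M M M).toLinearMap

/-- The induced multiplication of `(M ⊗ M) ⊗ M`. -/
noncomputable def mul3 :
    ((M ⊗[R] M) ⊗[R] M) ⊗[R] ((M ⊗[R] M) ⊗[R] M) →ₗ[R] (M ⊗[R] M) ⊗[R] M :=
  TensorProduct.map d.mul2 d.mul ∘ₗ
    (TensorProduct.tensorTensorTensorComm R (M ⊗[R] M) M (M ⊗[R] M) M).toLinearMap

/-- Left multiplication by `a`. -/
noncomputable def lmul (a : M) : M →ₗ[R] M := d.mul ∘ₗ TensorProduct.mk R M M a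

/-- Right multiplication by `c`. -/
noncomputable def rmul (c : M) : M →ₗ[R] M := d.mul ∘ₗ (TensorProduct.mk R M M).flip c

/-- Convolution product of endomorphisms. -/
noncomputable def conv (f g : M →ₗ[R] M) : M →ₗ[R] M :=
  d.mul ∘ₗ TensorProduct.map f g ∘ₗ d.comul

/-- The projection `⊓^L : a ↦ ε(1₁a)1₂`. -/
noncomputable def piL : M →ₗ[R] M :=
  (TensorProduct.lid R M).toLinearMap
    ∘ₗ rTensor M (d.counit ∘ₗ d.mul ∘ₗ (TensorProduct.comm R M M).toLinearMap)
    ∘ₗ (TensorProduct.assoc R M M M).symm.toLinearMap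
    ∘ₗ (TensorProduct.mk R M (M ⊗[R] M)).flip (d.comul d.one)

/-- The projection `⊓^R : a ↦ 1₁ε(a1₂)`. -/
noncomputable def piR : M →ₗ[R] M :=
  (TensorProduct.rid R M).toLinearMap
    ∘ₗ lTensor M (d.counit ∘ₗ d.mul ∘ₗ (TensorProduct.comm R M M).toLinearMap)
    ∘ₗ (TensorProduct.assoc R M M M).toLinearMap
    ∘ₗ TensorProduct.mk R (M ⊗[R] M) M (d.comul d.one)

/-- The axioms of a weak bialgebra on the data `d`. -/
structure IsWeakBialgebra : Prop where
  mul_assoc : d.mul ∘ₗ rTensor M d.mul =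
      d.mul ∘ₗ lTensor M d.mul ∘ₗ (TensorProduct.assoc R M M M).toLinearMap
  one_mul : ∀ x : M, d.mul (d.one ⊗ₜ[R] x) = x
  mul_one : ∀ x : M, d.mul (x ⊗ₜ[R] d.one) = x
  coassoc : (TensorProduct.assoc R M M M).toLinearMap ∘ₗ rTensor M d.comul ∘ₗ d.comul
      = lTensor M d.comul ∘ₗ d.comul
  counit_left : ∀ x : M, (TensorProduct.lid R M) (rTensor M d.counit (d.comul x)) = x
  counit_right : ∀ x : M, (TensorProduct.rid R M) (lTensor M d.counit (d.comul x)) = x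
  comul_mul : d.comul ∘ₗ d.mul = d.mul2 ∘ₗ TensorProduct.map d.comul d.comul
  delta_one_left : d.mul3 ((d.comul d.one ⊗ₜ[R] d.one) ⊗ₜ[R]
      ((TensorProduct.assoc R M M M).symm (d.one ⊗ₜ[R] d.comul d.one)))
      = rTensor M d.comul (d.comul d.one)
  delta_one_right : d.mul3 (((TensorProduct.assoc R M M M).symm
      (d.one ⊗ₜ[R] d.comul d.one)) ⊗ₜ[R] (d.comul d.one ⊗ₜ[R] d.one))
      = rTensor M d.comul (d.comul d.one)
  counit_mul_left : ∀ a b c : M, (TensorProduct.lid R R) (TensorProduct.map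
      (d.counit ∘ₗ d.lmul a) (d.counit ∘ₗ d.rmul c) (d.comul b))
      = d.counit (d.mul (d.mul (a ⊗ₜ[R] b) ⊗ₜ[R] c))
  counit_mul_right : ∀ a b c : M, (TensorProduct.lid R R) (TensorProduct.map
      (d.counit ∘ₗ d.rmul c) (d.counit ∘ₗ d.lmul a) (d.comul b))
      = d.counit (d.mul (d.mul (a ⊗ₜ[R] b) ⊗ₜ[R] c))

/-- The axioms of a (genuine) bialgebra on the data `d`. -/
structure IsBialgebra : Prop where
  mul_assoc : d.mul ∘ₗ rTensor M d.mul =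
      d.mul ∘ₗ lTensor M d.mul ∘ₗ (TensorProduct.assoc R M M M).toLinearMap
  one_mul : ∀ x : M, d.mul (d.one ⊗ₜ[R] x) = x
  mul_one : ∀ x : M, d.mul (x ⊗ₜ[R] d.one) = x
  coassoc : (TensorProduct.assoc R M M M).toLinearMap ∘ₗ rTensor M d.comul ∘ₗ d.comul
      = lTensor M d.comul ∘ₗ d.comul
  counit_left : ∀ x : M, (TensorProduct.lid R M) (rTensor M d.counit (d.comul x)) = x
  counit_right : ∀ x : M, (TensorProduct.rid R M) (lTensor M d.counit (d.comul x)) = x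
  comul_mul : d.comul ∘ₗ d.mul = d.mul2 ∘ₗ TensorProduct.map d.comul d.comul
  comul_one : d.comul d.one = d.one ⊗ₜ[R] d.one
  counit_one : d.counit d.one = 1
  counit_mul : ∀ x y : M, d.counit (d.mul (x ⊗ₜ[R] y)) = d.counit x * d.counit y

/-- `S` is an antipode for the data `d`. -/
def IsAntipode (S : M →ₗ[R] M) : Prop :=
  d.conv LinearMap.id S = d.piL ∧ d.conv S LinearMap.id = d.piR ∧
    d.conv (d.conv S LinearMap.id) S = S

end WBAData

/-- The canonical weak-bialgebra data attached to an algebra-and-coalgebra `H`. -/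
noncomputable def algWBA (R H : Type*) [CommRing R] [Ring H] [Algebra R H] [Coalgebra R H] :
    WBAData R H :=
  { mul := LinearMap.mul' R H
    one := 1
    comul := Coalgebra.comul
    counit := Coalgebra.counit }

set_option maxHeartbeats 1000000 in
set_option synthInstance.maxHeartbeats 400000 in
/-- for a grouplike `e` with `ea = eae`, the direct summand `eA` is a
bialgebra with unit `e` and the (co)restricted structure maps. -/
theorem grouplike_corner_bialgebra
    {R A : Type*} [CommRing R] [Ring A] [Bialgebra R A]
    (e : A) (he1 : Coalgebra.comul (R := R) e = e ⊗ₜ[R] e)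
    (he2 : Coalgebra.counit (R := R) e = (1 : R))
    (he3 : ∀ a : A, e * a = e * a * e) :
    let P : Submodule R A := LinearMap.range (LinearMap.mulLeft R e)
    -- `eA` is closed under multiplication
    (∀ x ∈ P, ∀ y ∈ P, x * y ∈ P) ∧
    -- `e` is a two-sided unit for `eA`
    (∀ x ∈ P, e * x = x ∧ x * e = x) ∧
    -- `Δ` maps `eA` into the canonical image of `eA ⊗ eA` in `A ⊗ A`
    (∀ x ∈ P, Coalgebra.comul (R := R) x ∈
      LinearMap.range (TensorProduct.map P.subtype P.subtype)) ∧
    -- `eA` is a bialgebra with the (co)restricted structure maps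
    (∃ d : WBAData R ↥P,
      (∀ x y : ↥P, ((d.mul (x ⊗ₜ[R] y) : ↥P) : A) = (x : A) * (y : A)) ∧
      (((d.one : ↥P) : A) = e) ∧
      (∀ x : ↥P, TensorProduct.map P.subtype P.subtype (d.comul x) =
        Coalgebra.comul (R := R) (x : A)) ∧
      (∀ x : ↥P, d.counit x = Coalgebra.counit (R := R) (x : A)) ∧
      d.IsBialgebra) := by
  intro P
  have hee : e * e = e := by simpa using (he3 1).symm
  have heP : ∀ x ∈ P, e * x = x := by
    rintro x ⟨a, rfl⟩
    simp only [LinearMap.mulLeft_apply, ← mul_assoc, hee]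
  have hPe : ∀ x ∈ P, x * e = x := by
    rintro x ⟨a, rfl⟩
    simp only [LinearMap.mulLeft_apply]
    exact (he3 a).symm
  have hclosed : ∀ x ∈ P, ∀ y ∈ P, x * y ∈ P := by
    rintro x ⟨a, rfl⟩ y hy
    exact ⟨a * y, by simp [mul_assoc]⟩
  -- the retraction
  set ι : ↥P →ₗ[R] A := P.subtype with hιdef
  have hι : ∀ x : ↥P, ι x = (x : A) := fun x => rfl
  set r : A →ₗ[R] ↥P := LinearMap.codRestrict P (LinearMap.mulLeft R e) (fun a => ⟨a, rfl⟩)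
    with hrdef
  have hrι : ∀ x : ↥P, r ((x : A)) = x := fun x => Subtype.ext (heP x x.2)
  have hrcomp : r ∘ₗ ι = LinearMap.id := LinearMap.ext hrι
  set ι2 : ↥P ⊗[R] ↥P →ₗ[R] A ⊗[R] A := TensorProduct.map ι ι with hι2def
  have h22 : TensorProduct.map r r ∘ₗ ι2 = LinearMap.id := by
    rw [hι2def, ← TensorProduct.map_comp, hrcomp, TensorProduct.map_id]
  have h22' : ∀ t, TensorProduct.map r r (ι2 t) = t := fun t => LinearMap.congr_fun h22 t
  have inj2 : Function.Injective ι2 := Function.LeftInverse.injective h22'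
  have h33 : TensorProduct.map r (TensorProduct.map r r) ∘ₗ TensorProduct.map ι ι2 =
      LinearMap.id := by
    rw [hι2def, ← TensorProduct.map_comp, ← TensorProduct.map_comp, hrcomp,
      TensorProduct.map_id, TensorProduct.map_id]
  have inj3 : Function.Injective (TensorProduct.map ι ι2) :=
    Function.LeftInverse.injective (fun t => LinearMap.congr_fun h33 t)
  -- comul maps P into the image of P ⊗ P
  have hmem2 : ∀ x ∈ P, Coalgebra.comul (R := R) x ∈ LinearMap.range ι2 := by
    rintro x ⟨a, rfl⟩
    simp only [LinearMap.mulLeft_apply]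
    rw [Bialgebra.comul_mul, he1]
    induction Coalgebra.comul (R := R) a using TensorProduct.induction_on with
    | zero => simp
    | tmul b c =>
        exact ⟨(⟨e * b, ⟨b, rfl⟩⟩ : ↥P) ⊗ₜ[R] (⟨e * c, ⟨c, rfl⟩⟩ : ↥P), by
          simp [hι2def, hι, Algebra.TensorProduct.tmul_mul_tmul]⟩
    | add u v hu hv =>
        rw [mul_add]
        exact add_mem hu hv
  have hmulmem : ∀ z : ↥P ⊗[R] ↥P, (LinearMap.mul' R A ∘ₗ ι2) z ∈ P := by
    intro z
    induction z using TensorProduct.induction_on with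
    | zero => simp
    | tmul x y => exact hclosed _ x.2 _ y.2
    | add u v hu hv => rw [map_add]; exact add_mem hu hv
  set d : WBAData R ↥P :=
    { mul := LinearMap.codRestrict P (LinearMap.mul' R A ∘ₗ ι2) hmulmem
      one := ⟨e, ⟨1, by simp [hee]⟩⟩
      comul := TensorProduct.map r r ∘ₗ (Coalgebra.comul (R := R) (A := A)) ∘ₗ ι
      counit := (Coalgebra.counit (R := R) (A := A)) ∘ₗ ι } with hddef
  have hmulcoe : ∀ x y : ↥P, ((d.mul (x ⊗ₜ[R] y) : ↥P) : A) = (x : A) * (y : A) := by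
    intro x y
    simp [hddef, hι2def, hι]
  have honecoe : ((d.one : ↥P) : A) = e := rfl
  have hcomulcoe : ∀ x : ↥P, ι2 (d.comul x) = Coalgebra.comul (R := R) (x : A) := by
    intro x
    obtain ⟨t, ht⟩ := hmem2 (x : A) x.2
    have : d.comul x = t := by
      simp only [hddef, LinearMap.comp_apply, hι, ← ht, h22']
    rw [this, ht]
  have hcounitcoe : ∀ x : ↥P, d.counit x = Coalgebra.counit (R := R) (x : A) := fun x => rfl
  have hι2 : ∀ x y : ↥P, ι2 (x ⊗ₜ[R] y) = (x : A) ⊗ₜ[R] (y : A) := fun x y => rfl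
  have hcomulcoe' : ∀ x : ↥P,
      ι2 (TensorProduct.map r r (Coalgebra.comul (R := R) ((x : A)))) =
        Coalgebra.comul (R := R) (x : A) := fun x => hcomulcoe x
  have hmulcoe' : ∀ x y : ↥P,
      ((LinearMap.codRestrict P (LinearMap.mul' R A ∘ₗ ι2) hmulmem (x ⊗ₜ[R] y) : ↥P) : A) =
        (x : A) * (y : A) := fun x y => hmulcoe x y
  -- naturality helpers
  have hnatR : ∀ w : ↥P ⊗[R] ↥P,
      TensorProduct.map ι2 ι (LinearMap.rTensor ↥P d.comul w) =
        LinearMap.rTensor A (Coalgebra.comul (R := R)) (ι2 w) := by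
    intro w
    induction w using TensorProduct.induction_on with
    | zero => simp
    | tmul x y => simp only [LinearMap.rTensor_tmul, TensorProduct.map_tmul, hι, hι2,
        hcomulcoe', hcomulcoe]
    | add u v hu hv => simp only [map_add, hu, hv]
  have hnatL : ∀ w : ↥P ⊗[R] ↥P,
      TensorProduct.map ι ι2 (LinearMap.lTensor ↥P d.comul w) =
        LinearMap.lTensor A (Coalgebra.comul (R := R)) (ι2 w) := by
    intro w
    induction w using TensorProduct.induction_on with
    | zero => simp
    | tmul x y => simp only [LinearMap.lTensor_tmul, TensorProduct.map_tmul, hι, hι2,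
        hcomulcoe', hcomulcoe]
    | add u v hu hv => simp only [map_add, hu, hv]
  have hassocnat : (TensorProduct.map ι ι2) ∘ₗ (TensorProduct.assoc R ↥P ↥P ↥P).toLinearMap =
      (TensorProduct.assoc R A A A).toLinearMap ∘ₗ TensorProduct.map ι2 ι := by
    apply TensorProduct.ext_threefold
    intro x y z
    simp [hι2, hι]
  have hmul2 : ∀ u v : ↥P ⊗[R] ↥P, ι2 (d.mul2 (u ⊗ₜ[R] v)) = ι2 u * ι2 v := by
    intro u v
    induction u using TensorProduct.induction_on with
    | zero => simp [TensorProduct.zero_tmul]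
    | add u1 u2 h1 h2 => simp only [TensorProduct.add_tmul, map_add, h1, h2, add_mul]
    | tmul a b =>
        induction v using TensorProduct.induction_on with
        | zero => simp [TensorProduct.tmul_zero]
        | add v1 v2 h1 h2 => simp only [TensorProduct.tmul_add, map_add, h1, h2, mul_add]
        | tmul c f =>
            simp [WBAData.mul2, TensorProduct.tensorTensorTensorComm_tmul, hι2def, hι,
              hmulcoe, Algebra.TensorProduct.tmul_mul_tmul]
  refine ⟨hclosed, fun x hx => ⟨heP x hx, hPe x hx⟩, hmem2, d, hmulcoe, honecoe,
    hcomulcoe, hcounitcoe, ?_⟩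
  constructor
  · -- mul_assoc
    apply TensorProduct.ext_threefold
    intro x y z
    apply Subtype.ext
    simp only [LinearMap.comp_apply, LinearMap.rTensor_tmul, LinearMap.lTensor_tmul,
      LinearEquiv.coe_coe, TensorProduct.assoc_tmul, hmulcoe, hmulcoe', hι2, hι,
      LinearMap.mul'_apply, LinearMap.codRestrict_apply, mul_assoc]
  · -- one_mul
    intro x
    exact Subtype.ext (by rw [hmulcoe, honecoe]; exact heP _ x.2)
  · -- mul_one
    intro x
    exact Subtype.ext (by rw [hmulcoe, honecoe]; exact hPe _ x.2)
  · -- coassoc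
    refine LinearMap.ext fun x => inj3 ?_
    simp only [LinearMap.comp_apply, LinearEquiv.coe_coe]
    rw [← LinearEquiv.coe_coe, ← LinearMap.comp_apply, hassocnat, LinearMap.comp_apply,
      hnatR, hnatL]
    simp only [hι, hcomulcoe', hcomulcoe]
    exact Coalgebra.coassoc_apply (x : A)
  · -- counit_left
    intro x
    apply Subtype.ext
    have hlid : ∀ w : R ⊗[R] ↥P,
        ((TensorProduct.lid R ↥P w : ↥P) : A) =
          TensorProduct.lid R A (LinearMap.lTensor R ι w) := by
      intro w
      induction w using TensorProduct.induction_on with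
      | zero => simp
      | tmul c y => simp [hι]
      | add u v hu hv => simp only [map_add, Submodule.coe_add, hu, hv]
    have hcnt : ∀ w : ↥P ⊗[R] ↥P,
        LinearMap.lTensor R ι (LinearMap.rTensor ↥P d.counit w) =
          LinearMap.rTensor A (Coalgebra.counit (R := R)) (ι2 w) := by
      intro w
      induction w using TensorProduct.induction_on with
      | zero => simp
      | tmul a b => simp only [LinearMap.rTensor_tmul, LinearMap.lTensor_tmul,
          TensorProduct.map_tmul, hι, hι2, hcounitcoe]
      | add u v hu hv => simp only [map_add, hu, hv]
    rw [hlid, hcnt]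
    simp only [hι, hcomulcoe', hcomulcoe, Coalgebra.rTensor_counit_comul]
    simp
  · -- counit_right
    intro x
    apply Subtype.ext
    have hrid : ∀ w : ↥P ⊗[R] R,
        ((TensorProduct.rid R ↥P w : ↥P) : A) =
          TensorProduct.rid R A (LinearMap.rTensor R ι w) := by
      intro w
      induction w using TensorProduct.induction_on with
      | zero => simp
      | tmul y c => simp [hι]
      | add u v hu hv => simp only [map_add, Submodule.coe_add, hu, hv]
    have hcnt : ∀ w : ↥P ⊗[R] ↥P,
        LinearMap.rTensor R ι (LinearMap.lTensor ↥P d.counit w) =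
          LinearMap.lTensor A (Coalgebra.counit (R := R)) (ι2 w) := by
      intro w
      induction w using TensorProduct.induction_on with
      | zero => simp
      | tmul a b => simp only [LinearMap.rTensor_tmul, LinearMap.lTensor_tmul,
          TensorProduct.map_tmul, hι, hι2, hcounitcoe]
      | add u v hu hv => simp only [map_add, hu, hv]
    rw [hrid, hcnt]
    simp only [hι, hcomulcoe', hcomulcoe, Coalgebra.lTensor_counit_comul]
    simp
  · -- comul_mul
    apply TensorProduct.ext'
    intro x y
    apply inj2
    simp only [LinearMap.comp_apply, TensorProduct.map_tmul, hι, hcomulcoe', hmulcoe',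
      hmul2, Bialgebra.comul_mul]
    rw [hcomulcoe, hcomulcoe, hcomulcoe, hmulcoe, Bialgebra.comul_mul]
  · -- comul_one
    apply inj2
    rw [hcomulcoe, honecoe, he1, hι2]
  · -- counit_one
    rw [hcounitcoe, honecoe, he2]
  · -- counit_mul
    intro x y
    rw [hcounitcoe, hcounitcoe, hcounitcoe, hmulcoe]
    exact Bialgebra.counit_mul _ _
end

section
/- Let k be a commutative ring, G a finite group, and A a k-algebra measured by kG with a twisted 2-cocycle: that is, for each g∈G an algebra homomorphism φ_g : A → A and for each pair g,h∈G an invertible element c_{g,h} ∈ A such that φ_1 = id_A, c_{1,g} = 1 = c_{g,1}, φ_g∘φ_h = Ad_{c_{g,h}}∘φ_{gh} (where Ad_u(x) = u·x·u⁻¹), and φ_g(c_{h,l})·c_{g,hl} = c_{g,h}·c_{gh,l} for all g,h,l∈G. Let M be the k-algebra of G×G matrices over k with matrix units e_{g,h}. Then the k-linear map ψ : M⊗A → A⊗M determined by ψ(e_{g,h}⊗a) = c_{g⁻¹h,h⁻¹}⁻¹·φ_{g⁻¹h}(a)·c_{g⁻¹h,h⁻¹} ⊗ e_{g,h} is a bijective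 distributive law between M and A. -/
open TensorProduct LinearMap

/-- The `(g,h)` matrix entry, as a linear functional. -/
def entryLM (R G : Type*) [CommRing R] (g h : G) : Matrix G G R →ₗ[R] R where
  toFun m := m g h
  map_add' _ _ := rfl
  map_smul' _ _ := rfl

/-- The map `ψ(e_{g,h} ⊗ a) = c_{g⁻¹h,h⁻¹}⁻¹ · φ_{g⁻¹h}(a) · c_{g⁻¹h,h⁻¹} ⊗ e_{g,h}`
associated to a measuring with a twisted 2-cocycle. -/
noncomputable def cocyclePsi {R G A : Type*} [CommRing R] [Group G] [Fintype G]
    [DecidableEq G] [Ring A] [Algebra R A]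
    (φf : G → (A →ₐ[R] A)) (c : G → G → Aˣ) :
    Matrix G G R ⊗[R] A →ₗ[R] A ⊗[R] Matrix G G R :=
  ∑ g : G, ∑ h : G,
    ((TensorProduct.mk R A (Matrix G G R)).flip (Matrix.single g h 1)) ∘ₗ
      (TensorProduct.lid R A).toLinearMap ∘ₗ
      TensorProduct.map (entryLM R G g h)
        (LinearMap.mulRight R ((c (g⁻¹ * h) h⁻¹ : Aˣ) : A) ∘ₗ
          LinearMap.mulLeft R (((c (g⁻¹ * h) h⁻¹)⁻¹ : Aˣ) : A) ∘ₗ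
          (φf (g⁻¹ * h)).toLinearMap)

set_option linter.unusedSectionVars false
set_option maxHeartbeats 1000000
set_option synthInstance.maxHeartbeats 400000

section CAux
variable {R G A : Type*} [CommRing R] [Group G] [Fintype G] [DecidableEq G]
  [Ring A] [Algebra R A]
variable (φf : G → (A →ₐ[R] A)) (c : G → G → Aˣ)

/-- The conjugated map. -/
noncomputable def thetaLM (g h : G) : A →ₗ[R] A :=
  LinearMap.mulRight R ((c (g⁻¹ * h) h⁻¹ : Aˣ) : A) ∘ₗ
    LinearMap.mulLeft R (((c (g⁻¹ * h) h⁻¹)⁻¹ : Aˣ) : A) ∘ₗ (φf (g⁻¹ * h)).toLinearMap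

lemma thetaLM_apply (g h : G) (a : A) :
    thetaLM φf c g h a =
      (((c (g⁻¹ * h) h⁻¹)⁻¹ : Aˣ) : A) * φf (g⁻¹ * h) a * ((c (g⁻¹ * h) h⁻¹ : Aˣ) : A) := rfl

lemma sum_rot3 {M : Type*} [AddCommMonoid M] (F : G → G → G → M) :
    ∑ l : G, ∑ k : G, ∑ g : G, F g k l = ∑ g : G, ∑ k : G, ∑ l : G, F g k l := by
  rw [Finset.sum_comm]
  refine (Finset.sum_congr rfl fun k _ => Finset.sum_comm).trans Finset.sum_comm

lemma sum_std_coeff {X : Type*} [AddCommMonoid X] [Module R X] (g h : G) (F : G → G → X) :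
    (∑ g' : G, ∑ h' : G, Matrix.single g h (1 : R) g' h' • F g' h') = F g h := by
  simp [Matrix.single, Matrix.of_apply, ite_and, ite_smul, Finset.sum_ite_eq]

lemma std_mul (g h l k : G) : Matrix.single g h (1 : R) * Matrix.single l k 1
    = if h = l then Matrix.single g k 1 else 0 := by
  by_cases h' : h = l
  · subst h'; simp [Matrix.single_mul_single_same]
  · simp [h', Matrix.single_mul_single_of_ne (c := (1 : R)) (i := g) (j := h) (k := l) (h := h') (d := 1)]

lemma one_eq_sum_std : (1 : Matrix G G R) = ∑ g : G, Matrix.single g g 1 := by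
  ext i j
  simp [Matrix.sum_apply, Matrix.single, Matrix.of_apply, ite_and,
    Finset.sum_ite_eq, Matrix.one_apply]


lemma unit_conj_mul (u : Aˣ) (x y : A) :
    ((u⁻¹ : Aˣ) : A) * (x * y) * (u : A) =
      (((u⁻¹ : Aˣ) : A) * x * (u : A)) * (((u⁻¹ : Aˣ) : A) * y * (u : A)) := by
  simp [mul_assoc, Units.mul_inv_cancel_left]

variable (h1 : φf 1 = AlgHom.id R A)
    (h2 : ∀ g : G, c 1 g = 1 ∧ c g 1 = 1)
    (h3 : ∀ (g h : G) (x : A),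
      φf g (φf h x) = (c g h : A) * φf (g * h) x * (((c g h)⁻¹ : Aˣ) : A))
    (h4 : ∀ g h l : G,
      φf g ((c h l : A)) * (c g (h * l) : A) = (c g h : A) * (c (g * h) l : A))

include h1 h2 in
lemma thetaLM_id (g : G) (a : A) : thetaLM φf c g g a = a := by
  rw [thetaLM_apply, inv_mul_cancel, h1, (h2 g⁻¹).1]
  simp

lemma thetaLM_one (g h : G) : thetaLM φf c g h (1 : A) = 1 := by
  rw [thetaLM_apply]
  simp

lemma thetaLM_mul (g h : G) (x y : A) :
    thetaLM φf c g h (x * y) = thetaLM φf c g h x * thetaLM φf c g h y := by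
  simp only [thetaLM_apply, map_mul, unit_conj_mul]

include h3 h4 in
lemma thetaLM_comp (g h k : G) (a : A) :
    thetaLM φf c g h (thetaLM φf c h k a) = thetaLM φf c g k a := by
  have hgk : g⁻¹ * h * (h⁻¹ * k) = g⁻¹ * k := by group
  set U : Aˣ := Units.map (φf (g⁻¹ * h) : A →* A) (c (h⁻¹ * k) k⁻¹) with hU
  have key : U * c (g⁻¹ * h) h⁻¹ = c (g⁻¹ * h) (h⁻¹ * k) * c (g⁻¹ * k) k⁻¹ := by
    apply Units.ext
    have h4' := h4 (g⁻¹ * h) (h⁻¹ * k) k⁻¹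
    rw [hgk] at h4'
    simp only [mul_inv_cancel_right] at h4'
    simpa [hU] using h4'
  have e2 : (c (g⁻¹ * h) (h⁻¹ * k))⁻¹ * U * c (g⁻¹ * h) h⁻¹ = c (g⁻¹ * k) k⁻¹ := by
    rw [mul_assoc, key]; group
  have e1 : (c (g⁻¹ * h) h⁻¹)⁻¹ * U⁻¹ * c (g⁻¹ * h) (h⁻¹ * k) = (c (g⁻¹ * k) k⁻¹)⁻¹ := by
    rw [← e2]; simp [mul_inv_rev, mul_assoc]
  have e2A : (((c (g⁻¹ * h) (h⁻¹ * k))⁻¹ : Aˣ) : A) * (U : A) * ((c (g⁻¹ * h) h⁻¹ : Aˣ) : A)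
      = ((c (g⁻¹ * k) k⁻¹ : Aˣ) : A) := by
    rw [← Units.val_mul, ← Units.val_mul, e2]
  have e1A : (((c (g⁻¹ * h) h⁻¹)⁻¹ : Aˣ) : A) * ((U⁻¹ : Aˣ) : A)
        * ((c (g⁻¹ * h) (h⁻¹ * k) : Aˣ) : A)
      = (((c (g⁻¹ * k) k⁻¹)⁻¹ : Aˣ) : A) := by
    rw [← Units.val_mul, ← Units.val_mul, e1]
  have hUc : φf (g⁻¹ * h) ((c (h⁻¹ * k) k⁻¹ : Aˣ) : A) = (U : A) := rfl
  have hUci : φf (g⁻¹ * h) (((c (h⁻¹ * k) k⁻¹)⁻¹ : Aˣ) : A) = ((U⁻¹ : Aˣ) : A) := by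
    rw [hU, ← map_inv (Units.map (φf (g⁻¹ * h) : A →* A))]
    rfl
  simp only [thetaLM_apply, map_mul]
  rw [hUc, hUci, h3 (g⁻¹ * h) (h⁻¹ * k) a, hgk, ← e1A, ← e2A]
  simp only [mul_assoc]


lemma cocyclePsi_tmul (m : Matrix G G R) (a : A) :
    cocyclePsi φf c (m ⊗ₜ[R] a) =
      ∑ g : G, ∑ h : G, m g h •
        (thetaLM φf c g h a ⊗ₜ[R] Matrix.single g h (1 : R)) := by
  simp only [cocyclePsi, LinearMap.sum_apply, LinearMap.coe_comp, Function.comp_apply,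
    TensorProduct.map_tmul, LinearEquiv.coe_coe, TensorProduct.lid_tmul,
    LinearMap.flip_apply, TensorProduct.mk_apply, LinearMap.map_smul,
    TensorProduct.smul_tmul']
  rfl

lemma cocyclePsi_std (g h : G) (a : A) :
    cocyclePsi φf c (Matrix.single g h (1 : R) ⊗ₜ[R] a) =
      thetaLM φf c g h a ⊗ₜ[R] Matrix.single g h (1 : R) := by
  rw [cocyclePsi_tmul, sum_std_coeff]


lemma sum_smul_std (m : Matrix G G R) :
    ∑ g : G, ∑ h : G, m g h • Matrix.single g h (1 : R) = m := by
  conv_rhs => rw [Matrix.matrix_eq_sum_single m]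
  simp [Matrix.smul_single]

/-- Candidate inverse of `cocyclePsi`. -/
noncomputable def cocycleChi : A ⊗[R] Matrix G G R →ₗ[R] Matrix G G R ⊗[R] A :=
  ∑ g : G, ∑ h : G,
    (TensorProduct.mk R (Matrix G G R) A (Matrix.single g h 1)) ∘ₗ
      (TensorProduct.rid R A).toLinearMap ∘ₗ
      TensorProduct.map (thetaLM φf c h g) (entryLM R G g h)

lemma cocycleChi_tmul (a : A) (m : Matrix G G R) :
    cocycleChi φf c (a ⊗ₜ[R] m) =
      ∑ g : G, ∑ h : G, m g h •
        (Matrix.single g h (1 : R) ⊗ₜ[R] thetaLM φf c h g a) := by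
  simp only [cocycleChi, LinearMap.sum_apply, LinearMap.coe_comp, Function.comp_apply,
    TensorProduct.map_tmul, LinearEquiv.coe_coe, TensorProduct.rid_tmul,
    TensorProduct.mk_apply, LinearMap.map_smul, TensorProduct.tmul_smul]
  rfl

lemma cocycleChi_std (g h : G) (a : A) :
    cocycleChi φf c (a ⊗ₜ[R] Matrix.single g h (1 : R)) =
      Matrix.single g h (1 : R) ⊗ₜ[R] thetaLM φf c h g a := by
  rw [cocycleChi_tmul, sum_std_coeff]

include h1 h2 h3 h4 in
lemma chi_comp_psi : cocycleChi φf c ∘ₗ cocyclePsi φf c = LinearMap.id := by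
  apply TensorProduct.ext'
  intro m a
  simp only [LinearMap.coe_comp, Function.comp_apply, LinearMap.id_coe, id_eq]
  rw [cocyclePsi_tmul]
  simp only [map_sum, LinearMap.map_smul, cocycleChi_std]
  have key : ∀ g h : G, thetaLM φf c h g (thetaLM φf c g h a) = a := fun g h => by
    rw [thetaLM_comp φf c h3 h4, thetaLM_id φf c h1 h2]
  simp only [key, TensorProduct.smul_tmul', ← TensorProduct.sum_tmul, sum_smul_std]

include h1 h2 h3 h4 in
lemma psi_comp_chi : cocyclePsi φf c ∘ₗ cocycleChi φf c = LinearMap.id := by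
  apply TensorProduct.ext'
  intro a m
  simp only [LinearMap.coe_comp, Function.comp_apply, LinearMap.id_coe, id_eq]
  rw [cocycleChi_tmul]
  simp only [map_sum, LinearMap.map_smul, cocyclePsi_std]
  have key : ∀ g h : G, thetaLM φf c g h (thetaLM φf c h g a) = a := fun g h => by
    rw [thetaLM_comp φf c h3 h4, thetaLM_id φf c h1 h2]
  simp only [key, ← TensorProduct.tmul_smul, ← TensorProduct.tmul_sum, sum_smul_std]

end CAux

/-- for an algebra measured by `kG` with a twisted 2-cocycle, the map
`ψ` is a bijective distributive law between the matrix algebra and `A`. -/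
theorem cocycle_dist_law
    {R G A : Type*} [CommRing R] [Group G] [Fintype G] [DecidableEq G]
    [Ring A] [Algebra R A]
    (φf : G → (A →ₐ[R] A)) (c : G → G → Aˣ)
    (h1 : φf 1 = AlgHom.id R A)
    (h2 : ∀ g : G, c 1 g = 1 ∧ c g 1 = 1)
    (h3 : ∀ (g h : G) (x : A),
      φf g (φf h x) = (c g h : A) * φf (g * h) x * (((c g h)⁻¹ : Aˣ) : A))
    (h4 : ∀ g h l : G,
      φf g ((c h l : A)) * (c g (h * l) : A) = (c g h : A) * (c (g * h) l : A)) :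
    -- `ψ` is determined by the stated formula on the matrix units
    (∀ (g h : G) (a : A),
      cocyclePsi φf c (Matrix.single g h (1 : R) ⊗ₜ[R] a) =
        ((((c (g⁻¹ * h) h⁻¹)⁻¹ : Aˣ) : A) * φf (g⁻¹ * h) a *
            ((c (g⁻¹ * h) h⁻¹ : Aˣ) : A)) ⊗ₜ[R] Matrix.single g h (1 : R)) ∧
    -- `ψ` is a distributive law between the matrix algebra `M` and `A`
    IsDistLaw R (cocyclePsi φf c) ∧
    -- `ψ` is bijective
    Function.Bijective (cocyclePsi φf c) := by
  constructor
  · intro g h a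
    rw [cocyclePsi_std, thetaLM_apply]
  constructor
  · refine ⟨?_, ?_, ?_, ?_⟩
    · -- multiplicativity in the matrix factor
      intro m m' a
      rw [cocyclePsi_tmul]
      conv_rhs => rw [cocyclePsi_tmul φf c m' a]
      simp only [tmul_sum, tmul_smul, map_sum, map_smul, LinearMap.map_smul, LinearEquiv.coe_coe,
        TensorProduct.assoc_symm_tmul, LinearMap.rTensor_tmul]
      simp only [cocyclePsi_tmul φf c m]
      simp only [TensorProduct.sum_tmul, TensorProduct.smul_tmul', map_sum, map_smul,
        LinearMap.map_smul, LinearEquiv.coe_coe, TensorProduct.assoc_tmul,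
        LinearMap.lTensor_tmul, LinearMap.mul'_apply, std_mul, TensorProduct.tmul_ite,
        smul_ite, smul_zero, Finset.sum_ite_eq', Finset.mem_univ, if_true,
        thetaLM_comp φf c h3 h4]
      simp only [Finset.smul_sum, ← TensorProduct.smul_tmul', smul_smul]
      simp only [Matrix.mul_apply, Finset.sum_smul]
      conv_rhs => rw [sum_rot3]
      exact Finset.sum_congr rfl fun g _ => Finset.sum_congr rfl fun k _ =>
        Finset.sum_congr rfl fun l _ => by rw [mul_comm]
    · -- multiplicativity in the algebra factor
      intro m a a'
      rw [cocyclePsi_tmul]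
      conv_rhs => rw [cocyclePsi_tmul φf c m a]
      simp only [TensorProduct.sum_tmul, TensorProduct.smul_tmul', map_sum, map_smul,
        LinearMap.map_smul, LinearEquiv.coe_coe, TensorProduct.assoc_tmul,
        LinearMap.lTensor_tmul, cocyclePsi_std, TensorProduct.assoc_symm_tmul,
        LinearMap.rTensor_tmul, LinearMap.mul'_apply, thetaLM_mul φf c]
      simp only [smul_mul_assoc]
    · -- unit of the matrix algebra
      intro a
      rw [cocyclePsi_tmul]
      simp only [Matrix.one_apply, ite_smul, zero_smul, one_smul, Finset.sum_ite_eq,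
        Finset.mem_univ, if_true, thetaLM_id φf c h1 h2]
      rw [← TensorProduct.tmul_sum, ← one_eq_sum_std]
    · -- unit of the algebra
      intro m
      rw [cocyclePsi_tmul]
      simp only [thetaLM_one φf c, ← TensorProduct.tmul_smul, ← TensorProduct.tmul_sum,
        sum_smul_std]
  · -- bijectivity
    have hc := chi_comp_psi φf c h1 h2 h3 h4
    have hp := psi_comp_chi φf c h1 h2 h3 h4
    refine Function.bijective_iff_has_inverse.mpr ⟨⇑(cocycleChi φf c), fun x => ?_, fun x => ?_⟩
    · simpa using LinearMap.congr_fun hc x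
    · simpa using LinearMap.congr_fun hp x
end

section
/- Let k be a field, N a positive integer that is not a multiple of the characteristic of k, and q ∈ k with q^N = 1. Let V denote the group algebra of the integers over k (the Laurent polynomial algebra, with basis {V^m : m∈ℤ}) and U the group algebra of ℤ/N over k (with basis {U^n : n∈ℤ/N}). Then the k-linear map ψ : V⊗U → U⊗V determined by ψ(V^m⊗U^n) = q^{nm}·U^n⊗V^m (well defined since q^N = 1) is a bijective distributive law between the k-algebras V and U; moreover ψ is comultiplicative: Δ_{U⊗V}∘ψ = (ψ⊗ψ)∘Δ_{V⊗U}, where Δ(V^m) = V^m⊗V^m on V and Δ(U^n) = (1/N)·Σ_{j=0}^{N-1} U^{j+n}⊗U^{-j} on U, and Δ_{V⊗U}, Δ_{U⊗V} are the tensor product comultiplications. -/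
open TensorProduct LinearMap

section QTaux
set_option linter.unusedSectionVars false

variable {k : Type*} [Field k] {N : ℕ} [NeZero N] {q : k}

lemma qt_pow_add (hq : q ^ N = 1) (x y : ZMod N) :
    q ^ (x + y).val = q ^ x.val * q ^ y.val := by
  rw [ZMod.val_add, ← pow_eq_pow_mod _ hq, pow_add]

lemma qt_pow_zero : q ^ (0 : ZMod N).val = 1 := by simp

lemma qt_pow_neg (hq : q ^ N = 1) (x : ZMod N) : q ^ x.val * q ^ (-x).val = 1 := by
  rw [← qt_pow_add hq, add_neg_cancel, qt_pow_zero]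

lemma qt_pow_neg' (hq : q ^ N = 1) (x : ZMod N) : q ^ (-x).val * q ^ x.val = 1 := by
  rw [mul_comm]; exact qt_pow_neg hq x

noncomputable def bV : Module.Basis ℤ k (AddMonoidAlgebra k ℤ) := AddMonoidAlgebra.basis ℤ k
noncomputable def bU : Module.Basis (ZMod N) k (AddMonoidAlgebra k (ZMod N)) := AddMonoidAlgebra.basis (ZMod N) k

lemma bV_apply (m : ℤ) : (bV (k := k)) m = AddMonoidAlgebra.single m 1 := rfl
lemma bU_apply (n : ZMod N) : (bU (k := k) (N := N)) n = AddMonoidAlgebra.single n 1 := rfl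

variable (ψ : AddMonoidAlgebra k ℤ ⊗[k] AddMonoidAlgebra k (ZMod N) →ₗ[k]
      AddMonoidAlgebra k (ZMod N) ⊗[k] AddMonoidAlgebra k ℤ)

set_option maxHeartbeats 1000000 in
set_option synthInstance.maxHeartbeats 400000 in
lemma qt_ax1 (hq : q ^ N = 1)
    (hψ : ∀ (m : ℤ) (n : ZMod N),
      ψ (AddMonoidAlgebra.single m 1 ⊗ₜ[k] AddMonoidAlgebra.single n 1) =
        q ^ (n * (m : ZMod N)).val •
          (AddMonoidAlgebra.single n 1 ⊗ₜ[k] AddMonoidAlgebra.single m 1)) :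
    ∀ (a a' : AddMonoidAlgebra k ℤ) (b : AddMonoidAlgebra k (ZMod N)),
      ψ ((a * a') ⊗ₜ[k] b) =
      lTensor _ (mul' k _) ((TensorProduct.assoc k _ _ _)
        (rTensor _ ψ ((TensorProduct.assoc k _ _ _).symm (a ⊗ₜ[k] ψ (a' ⊗ₜ[k] b))))) := by
  have h : (ψ ∘ₗ rTensor _ (mul' k (AddMonoidAlgebra k ℤ))
        ∘ₗ (TensorProduct.assoc k _ _ _).symm.toLinearMap)
      = lTensor _ (mul' k (AddMonoidAlgebra k ℤ))
        ∘ₗ (TensorProduct.assoc k _ _ _).toLinearMap ∘ₗ rTensor _ ψ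
        ∘ₗ (TensorProduct.assoc k _ _ _).symm.toLinearMap ∘ₗ lTensor _ ψ := by
    apply (bV.tensorProduct (bV.tensorProduct bU)).ext
    rintro ⟨m, m', n⟩
    simp only [Module.Basis.tensorProduct_apply, bV_apply, bU_apply, coe_comp, Function.comp_apply,
      LinearEquiv.coe_coe, assoc_symm_tmul, rTensor_tmul, lTensor_tmul, mul'_apply,
      AddMonoidAlgebra.single_mul_single, one_mul, hψ, tmul_smul, ← smul_tmul',
      map_smul, assoc_tmul, smul_smul]
    congr 1
    push_cast
    rw [mul_add, qt_pow_add hq, mul_comm]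
  intro a a' b
  have := LinearMap.congr_fun h (a ⊗ₜ (a' ⊗ₜ b))
  simpa only [coe_comp, Function.comp_apply, LinearEquiv.coe_coe, assoc_symm_tmul,
    rTensor_tmul, lTensor_tmul, mul'_apply] using this

set_option maxHeartbeats 1000000 in
set_option synthInstance.maxHeartbeats 400000 in
lemma qt_ax2 (hq : q ^ N = 1)
    (hψ : ∀ (m : ℤ) (n : ZMod N),
      ψ (AddMonoidAlgebra.single m 1 ⊗ₜ[k] AddMonoidAlgebra.single n 1) =
        q ^ (n * (m : ZMod N)).val •
          (AddMonoidAlgebra.single n 1 ⊗ₜ[k] AddMonoidAlgebra.single m 1)) :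
    ∀ (a : AddMonoidAlgebra k ℤ) (b b' : AddMonoidAlgebra k (ZMod N)),
      ψ (a ⊗ₜ[k] (b * b')) =
      rTensor _ (mul' k _) ((TensorProduct.assoc k _ _ _).symm
        (lTensor _ ψ ((TensorProduct.assoc k _ _ _) (ψ (a ⊗ₜ[k] b) ⊗ₜ[k] b')))) := by
  have h : (ψ ∘ₗ lTensor _ (mul' k (AddMonoidAlgebra k (ZMod N)))
        ∘ₗ (TensorProduct.assoc k _ _ _).toLinearMap)
      = rTensor _ (mul' k (AddMonoidAlgebra k (ZMod N)))
        ∘ₗ (TensorProduct.assoc k _ _ _).symm.toLinearMap ∘ₗ lTensor _ ψ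
        ∘ₗ (TensorProduct.assoc k _ _ _).toLinearMap ∘ₗ rTensor _ ψ := by
    apply ((bV.tensorProduct bU).tensorProduct bU).ext
    rintro ⟨⟨m, n⟩, n'⟩
    simp only [Module.Basis.tensorProduct_apply, bV_apply, bU_apply, coe_comp, Function.comp_apply,
      LinearEquiv.coe_coe, assoc_symm_tmul, rTensor_tmul, lTensor_tmul, mul'_apply,
      AddMonoidAlgebra.single_mul_single, one_mul, hψ, tmul_smul, ← smul_tmul',
      map_smul, assoc_tmul, smul_smul]
    congr 1
    rw [add_mul, qt_pow_add hq, mul_comm]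
  intro a b b'
  have := LinearMap.congr_fun h ((a ⊗ₜ b) ⊗ₜ b')
  simpa only [coe_comp, Function.comp_apply, LinearEquiv.coe_coe, assoc_tmul,
    rTensor_tmul, lTensor_tmul, mul'_apply] using this

set_option maxHeartbeats 1000000 in
set_option synthInstance.maxHeartbeats 400000 in
lemma qt_ax3
    (hψ : ∀ (m : ℤ) (n : ZMod N),
      ψ (AddMonoidAlgebra.single m 1 ⊗ₜ[k] AddMonoidAlgebra.single n 1) =
        q ^ (n * (m : ZMod N)).val •
          (AddMonoidAlgebra.single n 1 ⊗ₜ[k] AddMonoidAlgebra.single m 1)) :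
    ∀ b : AddMonoidAlgebra k (ZMod N),
      ψ ((1 : AddMonoidAlgebra k ℤ) ⊗ₜ[k] b) = b ⊗ₜ[k] (1 : AddMonoidAlgebra k ℤ) := by
  have h : ψ ∘ₗ (TensorProduct.mk k (AddMonoidAlgebra k ℤ) (AddMonoidAlgebra k (ZMod N))) 1
      = (TensorProduct.mk k (AddMonoidAlgebra k (ZMod N)) (AddMonoidAlgebra k ℤ)).flip 1 := by
    apply bU.ext
    intro n
    simp only [bU_apply, coe_comp, Function.comp_apply, TensorProduct.mk_apply, flip_apply,
      AddMonoidAlgebra.one_def, hψ, Int.cast_zero, mul_zero, ZMod.val_zero, pow_zero, one_smul]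
  intro b
  simpa only [coe_comp, Function.comp_apply, TensorProduct.mk_apply, flip_apply] using
    LinearMap.congr_fun h b

set_option maxHeartbeats 1000000 in
set_option synthInstance.maxHeartbeats 400000 in
lemma qt_ax4
    (hψ : ∀ (m : ℤ) (n : ZMod N),
      ψ (AddMonoidAlgebra.single m 1 ⊗ₜ[k] AddMonoidAlgebra.single n 1) =
        q ^ (n * (m : ZMod N)).val •
          (AddMonoidAlgebra.single n 1 ⊗ₜ[k] AddMonoidAlgebra.single m 1)) :
    ∀ a : AddMonoidAlgebra k ℤ,
      ψ (a ⊗ₜ[k] (1 : AddMonoidAlgebra k (ZMod N))) = (1 : AddMonoidAlgebra k (ZMod N)) ⊗ₜ[k] a := by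
  have h : ψ ∘ₗ (TensorProduct.mk k (AddMonoidAlgebra k ℤ) (AddMonoidAlgebra k (ZMod N))).flip 1
      = (TensorProduct.mk k (AddMonoidAlgebra k (ZMod N)) (AddMonoidAlgebra k ℤ)) 1 := by
    apply bV.ext
    intro m
    simp only [bV_apply, coe_comp, Function.comp_apply, TensorProduct.mk_apply, flip_apply,
      AddMonoidAlgebra.one_def, hψ, zero_mul, ZMod.val_zero, pow_zero, one_smul]
  intro a
  simpa only [coe_comp, Function.comp_apply, TensorProduct.mk_apply, flip_apply] using
    LinearMap.congr_fun h a

set_option maxHeartbeats 1000000 in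
set_option synthInstance.maxHeartbeats 400000 in
lemma qt_bij (hq : q ^ N = 1)
    (hψ : ∀ (m : ℤ) (n : ZMod N),
      ψ (AddMonoidAlgebra.single m 1 ⊗ₜ[k] AddMonoidAlgebra.single n 1) =
        q ^ (n * (m : ZMod N)).val •
          (AddMonoidAlgebra.single n 1 ⊗ₜ[k] AddMonoidAlgebra.single m 1)) :
    Function.Bijective ψ := by
  set φ : AddMonoidAlgebra k (ZMod N) ⊗[k] AddMonoidAlgebra k ℤ →ₗ[k]
      AddMonoidAlgebra k ℤ ⊗[k] AddMonoidAlgebra k (ZMod N) :=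
    (bU.tensorProduct bV).constr k fun p =>
      q ^ ((-(p.1 * (p.2 : ZMod N))).val) •
        (AddMonoidAlgebra.single p.2 1 ⊗ₜ[k] AddMonoidAlgebra.single p.1 1) with hφdef
  have hφ : ∀ (n : ZMod N) (m : ℤ),
      φ (AddMonoidAlgebra.single n 1 ⊗ₜ[k] AddMonoidAlgebra.single m 1) =
        q ^ ((-(n * (m : ZMod N))).val) •
          (AddMonoidAlgebra.single m 1 ⊗ₜ[k] AddMonoidAlgebra.single n 1) := by
    intro n m
    have e : (AddMonoidAlgebra.single n (1:k) ⊗ₜ[k] AddMonoidAlgebra.single m (1:k))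
        = (bU.tensorProduct bV) (n, m) := by
      rw [Module.Basis.tensorProduct_apply]; rfl
    rw [e, hφdef, Module.Basis.constr_basis]
  have h1 : φ ∘ₗ ψ = LinearMap.id := by
    apply (bV.tensorProduct bU).ext
    rintro ⟨m, n⟩
    simp only [Module.Basis.tensorProduct_apply, bV_apply, bU_apply, coe_comp, Function.comp_apply,
      hψ, map_smul, hφ, smul_smul, id_coe, id_eq]
    rw [qt_pow_neg hq, one_smul]
  have h2 : ψ ∘ₗ φ = LinearMap.id := by
    apply (bU.tensorProduct bV).ext
    rintro ⟨n, m⟩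
    simp only [Module.Basis.tensorProduct_apply, bU_apply, bV_apply, coe_comp, Function.comp_apply,
      hφ, map_smul, hψ, smul_smul, id_coe, id_eq]
    rw [qt_pow_neg' hq, one_smul]
  exact Function.bijective_iff_has_inverse.mpr
    ⟨φ, fun x => LinearMap.congr_fun h1 x, fun x => LinearMap.congr_fun h2 x⟩

set_option maxHeartbeats 1000000 in
set_option synthInstance.maxHeartbeats 400000 in
lemma qt_comon (hq : q ^ N = 1)
    (hψ : ∀ (m : ℤ) (n : ZMod N),
      ψ (AddMonoidAlgebra.single m 1 ⊗ₜ[k] AddMonoidAlgebra.single n 1) =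
        q ^ (n * (m : ZMod N)).val •
          (AddMonoidAlgebra.single n 1 ⊗ₜ[k] AddMonoidAlgebra.single m 1))
    (ΔV : AddMonoidAlgebra k ℤ →ₗ[k] AddMonoidAlgebra k ℤ ⊗[k] AddMonoidAlgebra k ℤ)
    (ΔU : AddMonoidAlgebra k (ZMod N) →ₗ[k]
        AddMonoidAlgebra k (ZMod N) ⊗[k] AddMonoidAlgebra k (ZMod N))
    (hΔV : ∀ m : ℤ, ΔV (AddMonoidAlgebra.single m 1) =
        AddMonoidAlgebra.single m 1 ⊗ₜ[k] AddMonoidAlgebra.single m 1)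
    (hΔU : ∀ n : ZMod N, ΔU (AddMonoidAlgebra.single n 1) =
        (N : k)⁻¹ • ∑ j : ZMod N,
          (AddMonoidAlgebra.single (j + n) 1 ⊗ₜ[k] AddMonoidAlgebra.single (-j) 1)) :
    comulD k ΔU ΔV ∘ₗ ψ = TensorProduct.map ψ ψ ∘ₗ comulD k ΔV ΔU := by
  apply (bV.tensorProduct bU).ext
  rintro ⟨m, n⟩
  simp only [Module.Basis.tensorProduct_apply, bV_apply, bU_apply, comulD, coe_comp,
    Function.comp_apply, LinearEquiv.coe_coe, hψ, map_smul, TensorProduct.map_tmul,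
    hΔV, hΔU, ← smul_tmul', tmul_smul, sum_tmul, tmul_sum, map_sum,
    tensorTensorTensorComm_tmul, smul_smul, Finset.smul_sum]
  refine Finset.sum_congr rfl fun j _ => ?_
  congr 1
  rw [← qt_pow_add hq, mul_comm]
  congr 2
  ring_nf

end QTaux


/-- the distributive law of the algebraic quantum torus. -/
theorem quantum_torus_dist_law
    {k : Type*} [Field k] (N : ℕ) [NeZero N] (hchar : (N : k) ≠ 0)
    (q : k) (hq : q ^ N = 1) :
    -- the maps `ψ`, `Δ_V`, `Δ_U` determined by the stated formulas exist ...
    (∃ (ψ : AddMonoidAlgebra k ℤ ⊗[k] AddMonoidAlgebra k (ZMod N) →ₗ[k]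
          AddMonoidAlgebra k (ZMod N) ⊗[k] AddMonoidAlgebra k ℤ)
       (ΔV : AddMonoidAlgebra k ℤ →ₗ[k] AddMonoidAlgebra k ℤ ⊗[k] AddMonoidAlgebra k ℤ)
       (ΔU : AddMonoidAlgebra k (ZMod N) →ₗ[k]
          AddMonoidAlgebra k (ZMod N) ⊗[k] AddMonoidAlgebra k (ZMod N)),
      (∀ (m : ℤ) (n : ZMod N),
        ψ (AddMonoidAlgebra.single m 1 ⊗ₜ[k] AddMonoidAlgebra.single n 1) =
          q ^ (n * (m : ZMod N)).val •
            (AddMonoidAlgebra.single n 1 ⊗ₜ[k] AddMonoidAlgebra.single m 1)) ∧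
      (∀ m : ℤ, ΔV (AddMonoidAlgebra.single m 1) =
        AddMonoidAlgebra.single m 1 ⊗ₜ[k] AddMonoidAlgebra.single m 1) ∧
      (∀ n : ZMod N, ΔU (AddMonoidAlgebra.single n 1) =
        (N : k)⁻¹ • ∑ j : ZMod N,
          (AddMonoidAlgebra.single (j + n) 1 ⊗ₜ[k] AddMonoidAlgebra.single (-j) 1))) ∧
    -- ... and any such maps give a bijective, comultiplicative distributive law
    (∀ (ψ : AddMonoidAlgebra k ℤ ⊗[k] AddMonoidAlgebra k (ZMod N) →ₗ[k]
          AddMonoidAlgebra k (ZMod N) ⊗[k] AddMonoidAlgebra k ℤ)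
       (ΔV : AddMonoidAlgebra k ℤ →ₗ[k] AddMonoidAlgebra k ℤ ⊗[k] AddMonoidAlgebra k ℤ)
       (ΔU : AddMonoidAlgebra k (ZMod N) →ₗ[k]
          AddMonoidAlgebra k (ZMod N) ⊗[k] AddMonoidAlgebra k (ZMod N)),
      (∀ (m : ℤ) (n : ZMod N),
        ψ (AddMonoidAlgebra.single m 1 ⊗ₜ[k] AddMonoidAlgebra.single n 1) =
          q ^ (n * (m : ZMod N)).val •
            (AddMonoidAlgebra.single n 1 ⊗ₜ[k] AddMonoidAlgebra.single m 1)) →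
      (∀ m : ℤ, ΔV (AddMonoidAlgebra.single m 1) =
        AddMonoidAlgebra.single m 1 ⊗ₜ[k] AddMonoidAlgebra.single m 1) →
      (∀ n : ZMod N, ΔU (AddMonoidAlgebra.single n 1) =
        (N : k)⁻¹ • ∑ j : ZMod N,
          (AddMonoidAlgebra.single (j + n) 1 ⊗ₜ[k] AddMonoidAlgebra.single (-j) 1)) →
      IsDistLaw k ψ ∧ Function.Bijective ψ ∧
      comulD k ΔU ΔV ∘ₗ ψ = TensorProduct.map ψ ψ ∘ₗ comulD k ΔV ΔU) := by
  constructor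
  · refine ⟨(bV.tensorProduct bU).constr k (fun p => q ^ ((p.2 * (p.1 : ZMod N)).val) •
        (AddMonoidAlgebra.single p.2 (1:k) ⊗ₜ[k] AddMonoidAlgebra.single p.1 (1:k))),
      bV.constr k (fun m => AddMonoidAlgebra.single m (1:k) ⊗ₜ[k] AddMonoidAlgebra.single m (1:k)),
      bU.constr k (fun n => (N : k)⁻¹ • ∑ j : ZMod N,
        (AddMonoidAlgebra.single (j + n) (1:k) ⊗ₜ[k] AddMonoidAlgebra.single (-j) (1:k))),
      ?_, ?_, ?_⟩
    · intro m n
      have e : (AddMonoidAlgebra.single m (1:k) ⊗ₜ[k] AddMonoidAlgebra.single n (1:k))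
          = (bV.tensorProduct bU) (m, n) := by rw [Module.Basis.tensorProduct_apply]; rfl
      rw [e, Module.Basis.constr_basis]
    · intro m
      exact Module.Basis.constr_basis bV k _ m
    · intro n
      exact Module.Basis.constr_basis bU k _ n
  · intro ψ ΔV ΔU hψ hΔV hΔU
    exact ⟨⟨qt_ax1 ψ hq hψ, qt_ax2 ψ hq hψ, qt_ax3 ψ hψ, qt_ax4 ψ hψ⟩,
      qt_bij ψ hq hψ, qt_comon ψ hq hψ ΔV ΔU hΔV hΔU⟩
end
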